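/- Let x ∈ S and μ a finite positive Borel measure on S with μ(S) < 1. Then ‖δ_x − μ‖*_FM = 1 − μ(S) + ∫_S min(2, d(x,y)) dμ(y). -/

import Mathlib

open MeasureTheory

/-- ‖δ_x − μ‖*_FM when μ(S) < 1. -/
theorem stmt_11 {S : Type*} [MetricSpace S] [MeasurableSpace S] [BorelSpace S]
    (x : S) (μ : Measure S) [IsFiniteMeasure μ] (hμ : μ Set.univ < 1) :
    sSup {r : ℝ | ∃ f : S → ℝ, LipschitzWith 1 f ∧ (∀ y, |f y| ≤ 1) ∧
        r = ∫ y, f y ∂(Measure.dirac x) - ∫ y, f y ∂μ}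
      = 1 - (μ Set.univ).toReal + ∫ y, min 2 (dist x y) ∂μ := by
  set M := (μ Set.univ).toReal with hMdef
  have hμfin : μ Set.univ ≠ ⊤ := (lt_of_lt_of_le hμ le_top).ne
  have hM1 : M < 1 := by
    have := (ENNReal.toReal_lt_toReal hμfin ENNReal.one_ne_top).mpr hμ
    simpa using this
  have hcont : Continuous fun y => min 2 (dist x y) :=
    continuous_const.min (Continuous.dist continuous_const continuous_id)
  have hint : Integrable (fun y => min 2 (dist x y)) μ := by
    apply Integrable.mono' (integrable_const 2) hcont.aestronglyMeasurable
    filter_upwards with y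
    rw [Real.norm_eq_abs, abs_of_nonneg (le_min (by norm_num) dist_nonneg)]
    exact min_le_left _ _
  set I := ∫ y, min 2 (dist x y) ∂μ with hIdef
  apply IsGreatest.csSup_eq
  constructor
  · -- membership: the optimal function
    refine ⟨fun y => 1 - min 2 (dist x y), ?_, ?_, ?_⟩
    · have h1 : LipschitzWith 1 fun y : S => min 2 (dist x y) :=
        ((LipschitzWith.const 2).min (LipschitzWith.dist_right x)).weaken (by simp)
      refine LipschitzWith.of_dist_le_mul fun a b => ?_
      have h2 := h1.dist_le_mul a b
      simp only [Real.dist_eq] at h2 ⊢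
      calc |1 - min 2 (dist x a) - (1 - min 2 (dist x b))|
          = |min 2 (dist x a) - min 2 (dist x b)| := by rw [abs_sub_comm]; ring_nf
        _ ≤ 1 * dist a b := h2
    · intro y
      rw [abs_le]
      dsimp only
      constructor
      · have : min 2 (dist x y) ≤ 2 := min_le_left _ _
        linarith
      · have : (0:ℝ) ≤ min 2 (dist x y) := le_min (by norm_num) dist_nonneg
        linarith
    · have hd : ∫ y, (1 - min 2 (dist x y)) ∂(Measure.dirac x) = 1 := by
        rw [integral_dirac]
        simp [dist_self]
      have hm : ∫ y, (1 - min 2 (dist x y)) ∂μ = M - I := by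
        rw [integral_sub (integrable_const 1) hint]
        simp [hMdef, hIdef, measureReal_def]
      rw [hd, hm]; ring
  · -- upper bound
    rintro r ⟨f, hf, hb, rfl⟩
    have hfc : Continuous f := hf.continuous
    have hfint : Integrable f μ := by
      apply Integrable.mono' (integrable_const 1) hfc.aestronglyMeasurable
      filter_upwards with y
      rw [Real.norm_eq_abs]; exact hb y
    rw [integral_dirac]
    have hsub : Integrable (fun y => f x - f y) μ := (integrable_const (f x)).sub hfint
    have hle : ∫ y, (f x - f y) ∂μ ≤ I := by
      apply integral_mono hsub hint
      intro y
      dsimp only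
      refine le_min ?_ ?_
      · have h1 := (abs_le.mp (hb x)).2
        have h2 := (abs_le.mp (hb y)).1
        linarith
      · have := hf.dist_le_mul x y
        rw [Real.dist_eq] at this
        calc f x - f y ≤ |f x - f y| := le_abs_self _
          _ ≤ 1 * dist x y := this
          _ = dist x y := one_mul _
    have heq : ∫ y, (f x - f y) ∂μ = M * f x - ∫ y, f y ∂μ := by
      rw [integral_sub (integrable_const (f x)) hfint]
      simp [hMdef, mul_comm, measureReal_def]
    have hfx : f x * (1 - M) ≤ 1 - M := by
      have := mul_le_mul_of_nonneg_right (abs_le.mp (hb x)).2 (sub_nonneg.mpr hM1.le)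
      linarith
    nlinarith [hle, heq, hfx]
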